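/- arXiv:1009.3997 — 7 statements merged into one kernel-verified Lean document; each statement's English description precedes it below -/
import Mathlib

section
/- The horizontal and vertical switches preserve the invariant K: for every (x,y) ∈ ℝ², K(−x + |y|, y) = K(x,y) and K(x, −y + |x|) = K(x,y). In other words, for a point P = (x,y) on the nonagon Υ_κ, the point (−x+|y|, y) obtained as the second intersection of the horizontal line through P with Υ_κ again lies on Υ_κ, and similarly for the vertical switch. -/
/-- `H(x,y) = max(x, -y, -x+y, -x-y)`. -/
noncomputable def H (x y : ℝ) : ℝ :=
  max x (max (-y) (max (-x + y) (-x - y)))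

/-- `K(x,y) = min(H(x,y), H(y,x))`. -/
noncomputable def K (p : ℝ × ℝ) : ℝ :=
  min (H p.1 p.2) (H p.2 p.1)

lemma Hle {a b c d M : ℝ} (h1 : a ≤ M) (h2 : b ≤ M) (h3 : c ≤ M) (h4 : d ≤ M) :
    max a (max b (max c d)) ≤ M := max_le h1 (max_le h2 (max_le h3 h4))

set_option linter.unreachableTactic false
set_option linter.unusedTactic false

lemma Hsw1 {x y : ℝ} (h : 0 ≤ y) : H (-x + y) y = H x y := by
  unfold H
  apply le_antisymm <;> apply Hle <;>
    simp only [le_max_iff] <;>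
    first
      | exact .inl (by linarith)
      | exact .inr (.inl (by linarith))
      | exact .inr (.inr (.inl (by linarith)))
      | exact .inr (.inr (.inr (by linarith)))

lemma Hsw1' {x y : ℝ} (h : y ≤ 0) : H (-x - y) y = H x y := by
  unfold H
  apply le_antisymm <;> apply Hle <;>
    simp only [le_max_iff] <;>
    first
      | exact .inl (by linarith)
      | exact .inr (.inl (by linarith))
      | exact .inr (.inr (.inl (by linarith)))
      | exact .inr (.inr (.inr (by linarith)))

lemma Hsw2 {x y : ℝ} (h : 0 ≤ y) : H y (-x + y) = H y x := by
  unfold H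
  apply le_antisymm <;> apply Hle <;>
    simp only [le_max_iff] <;>
    first
      | exact .inl (by linarith)
      | exact .inr (.inl (by linarith))
      | exact .inr (.inr (.inl (by linarith)))
      | exact .inr (.inr (.inr (by linarith)))

lemma Hle_neg {x y : ℝ} (h : y ≤ 0) : H x y ≤ H y x := by
  unfold H
  apply Hle <;> simp only [le_max_iff]
  · exact .inr (.inr (.inl (by linarith)))
  · rcases le_total x 0 with h' | h'
    · exact .inr (.inr (.inr (by linarith)))
    · exact .inr (.inr (.inl (by linarith)))
  · exact .inr (.inl (by linarith))
  · exact .inr (.inr (.inr (by linarith)))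

lemma Hle_neg' {x y : ℝ} (h : y ≤ 0) : H x y ≤ H y (-x - y) := by
  unfold H
  apply Hle <;> simp only [le_max_iff]
  · exact .inr (.inr (.inr (by linarith)))
  · rcases le_total (x + y) 0 with h' | h'
    · exact .inr (.inr (.inl (by linarith)))
    · exact .inr (.inr (.inr (by linarith)))
  · exact .inr (.inr (.inl (by linarith)))
  · exact .inr (.inr (.inl (by linarith)))

lemma hsw (x y : ℝ) : K (-x + |y|, y) = K (x, y) := by
  rcases abs_cases y with ⟨h, hy⟩ | ⟨h, hy⟩
  · rw [h]
    simp only [K]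
    rw [Hsw1 hy, Hsw2 hy]
  · rw [h]
    simp only [K]
    have e : -x + -y = -x - y := by ring
    rw [e, Hsw1' (by linarith)]
    rw [min_eq_left (Hle_neg' (by linarith)), min_eq_left (Hle_neg (by linarith))]

/-- The horizontal switch `(x,y) ↦ (-x+|y|, y)` and the vertical switch
`(x,y) ↦ (x, -y+|x|)` both preserve the invariant `K`; in particular they map
each nonagon `Υ_κ` to itself. -/
theorem switches_preserve_K (x y : ℝ) :
    K (-x + |y|, y) = K (x, y) ∧ K (x, -y + |x|) = K (x, y) := by
  have Ksymm : ∀ a b : ℝ, K (a, b) = K (b, a) := fun a b => by simp [K, min_comm]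
  exact ⟨hsw x y, by rw [Ksymm x (-y + |x|), hsw y x, Ksymm]⟩
end

section
/- The map Ψ₁ preserves the function H: for every (x,y) ∈ ℝ², writing Ψ₁(x,y) = (x̄, ȳ), one has H(x̄, ȳ) = H(x,y). Consequently each curve Γ̄_κ = {(x,y) : H(x,y) = κ} (κ > 0) is an invariant curve of Ψ₁. -/
/-- The ultradiscrete QRT map `Ψ₁(x,y) = (x̄, ȳ)` with `x̄ = -x + |y|` and
`ȳ = -y + max(x̄, 0)`. -/
noncomputable def psi1 (p : ℝ × ℝ) : ℝ × ℝ :=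
  (-p.1 + |p.2|, -p.2 + max (-p.1 + |p.2|) 0)

set_option maxHeartbeats 4000000 in
lemma key : ∀ p : ℝ × ℝ, H (psi1 p).1 (psi1 p).2 = H p.1 p.2 := by
  rintro ⟨x, y⟩
  rcases abs_cases y with ⟨h1,h2⟩|⟨h1,h2⟩ <;>
  simp only [psi1, H, h1, max_def] <;> split_ifs <;> linarith

/-- `Ψ₁` preserves `H`; consequently each curve `Γ̄_κ = {H = κ}` (κ > 0) is an
invariant curve of `Ψ₁`. -/
theorem psi1_preserves_H :
    (∀ p : ℝ × ℝ, H (psi1 p).1 (psi1 p).2 = H p.1 p.2) ∧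
    ∀ κ : ℝ, 0 < κ → ∀ p : ℝ × ℝ, H p.1 p.2 = κ → H (psi1 p).1 (psi1 p).2 = κ := by
  exact ⟨key, fun κ _ p h => (key p).trans h⟩
end

section
/- The ultradiscrete QRT map Ψ₂ is periodic with period seven: for every (x,y) ∈ ℝ², Ψ₂⁷(x,y) = (x,y). -/
/-- The ultradiscrete QRT map `Ψ₂(x,y) = (x̄, ȳ)` with `x̄ = -x + max(y, 0)` and
`ȳ = -y + |x̄|`. -/
noncomputable def psi2 (p : ℝ × ℝ) : ℝ × ℝ :=
  (-p.1 + max p.2 0, -p.2 + |(-p.1 + max p.2 0)|)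

lemma psi2_if (x y : ℝ) : psi2 (x, y) =
    (if 0 ≤ y then
      (if 0 ≤ -x + y then (-x + y, -y + (-x + y)) else (-x + y, -y - (-x + y)))
    else (if 0 ≤ -x then (-x, -y + -x) else (-x, -y - -x))) := by
  simp only [psi2]
  by_cases h1 : 0 ≤ y
  · rw [max_eq_left h1, if_pos h1]
    by_cases h2 : 0 ≤ -x + y
    · rw [abs_of_nonneg h2, if_pos h2]
    · rw [abs_of_nonpos (le_of_not_ge h2), if_neg h2]
      simp only [Prod.mk.injEq]; constructor; trivial; ring
  · rw [max_eq_right (le_of_not_ge h1), if_neg h1, add_zero]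
    by_cases h2 : 0 ≤ -x
    · rw [abs_of_nonneg h2, if_pos h2]
    · rw [abs_of_nonpos (le_of_not_ge h2), if_neg h2]
      simp only [Prod.mk.injEq]; constructor; trivial; ring

set_option maxHeartbeats 2000000 in
/-- `Ψ₂` is periodic with period seven. -/
theorem psi2_period_seven (p : ℝ × ℝ) : psi2^[7] p = p := by
  obtain ⟨x, y⟩ := p
  iterate 7
    all_goals (rw [Function.iterate_succ_apply, psi2_if]; split_ifs <;> try (exfalso; linarith))
  all_goals (simp only [Function.iterate_zero, id_eq, Prod.mk.injEq]; constructor <;> linarith)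
end

section
/- The map Ψ₂ preserves the function (x,y) ↦ H(y,x): for every (x,y) ∈ ℝ², writing Ψ₂(x,y) = (x̄, ȳ), one has H(ȳ, x̄) = H(y, x). Consequently each curve {(x,y) : H(y,x) = κ} (κ > 0) is an invariant curve of Ψ₂. -/
set_option maxHeartbeats 2000000

/-- `Ψ₂` preserves `(x,y) ↦ H(y,x)`; consequently each curve `{H(y,x) = κ}`
(κ > 0) is an invariant curve of `Ψ₂`. -/
theorem psi2_preserves_H_swapped :
    (∀ p : ℝ × ℝ, H (psi2 p).2 (psi2 p).1 = H p.2 p.1) ∧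
    ∀ κ : ℝ, 0 < κ → ∀ p : ℝ × ℝ, H p.2 p.1 = κ → H (psi2 p).2 (psi2 p).1 = κ := by
  have key : ∀ p : ℝ × ℝ, H (psi2 p).2 (psi2 p).1 = H p.2 p.1 := by
    rintro ⟨x, y⟩
    simp only [psi2, H]
    rcases le_total y 0 with hy | hy
    · rw [max_eq_right hy]
      rcases abs_cases (-x + 0) with ⟨h1, h2⟩ | ⟨h1, h2⟩ <;> rw [h1] <;>
        simp only [max_def] <;> split_ifs <;> linarith
    · rw [max_eq_left hy]
      rcases abs_cases (-x + y) with ⟨h1, h2⟩ | ⟨h1, h2⟩ <;> rw [h1] <;>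
        simp only [max_def] <;> split_ifs <;> linarith
  exact ⟨key, fun κ _ p hp => (key p).trans hp⟩
end

section
/- The maps Ψ₁ and Ψ₂ are mutually symmetric with respect to the line y = x: letting σ(x,y) = (y,x) denote the reflection, for every (x,y) ∈ ℝ² one has Ψ₂(σ(Ψ₁(x,y))) = σ(x,y); equivalently, σ ∘ Ψ₂ ∘ σ is the inverse map of Ψ₁. -/
/-- The reflection `σ(x,y) = (y,x)` in the line `y = x`. -/
def refl' (p : ℝ × ℝ) : ℝ × ℝ := (p.2, p.1)

lemma key_s9 (p : ℝ × ℝ) : psi2 (refl' (psi1 p)) = refl' p := by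
  obtain ⟨x, y⟩ := p
  simp only [psi1, psi2, refl', Prod.mk.injEq]
  have h : -(-y + max (-x + |y|) 0) + max (-x + |y|) 0 = y := by ring
  refine ⟨h, ?_⟩
  rw [h]
  ring

lemma key2 (p : ℝ × ℝ) : psi1 (refl' (psi2 p)) = refl' p := by
  obtain ⟨x, y⟩ := p
  simp only [psi1, psi2, refl', Prod.mk.injEq]
  have h : -(-y + |(-x + max y 0)|) + |(-x + max y 0)| = y := by ring
  refine ⟨h, ?_⟩
  rw [h]
  ring

/-- `Ψ₁` and `Ψ₂` are mutually symmetric with respect to `y = x`: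
`Ψ₂ ∘ σ ∘ Ψ₁ = σ`, i.e. `σ ∘ Ψ₂ ∘ σ` is the inverse of `Ψ₁`. -/
theorem psi2_symmetric_psi1 :
    (∀ p : ℝ × ℝ, psi2 (refl' (psi1 p)) = refl' p) ∧
    Function.LeftInverse (refl' ∘ psi2 ∘ refl') psi1 ∧
    Function.RightInverse (refl' ∘ psi2 ∘ refl') psi1 := by
  refine ⟨key_s9, ?_, ?_⟩
  · intro p
    show refl' (psi2 (refl' (psi1 p))) = p
    rw [key_s9 p]; rfl
  · intro p
    show psi1 (refl' (psi2 (refl' p))) = p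
    rw [key2 (refl' p)]; rfl
end

section
/- Sufficient condition for integrability of a map arising from a pair of tropical elliptic pencils: let α₀₁, α₀₂, α₁₀, α₁₂, α₂₀, α₂₁, α₂₂ be real parameters and define F₁(y) = max(α₂₀+2y, α₂₁+y, α₂₂), F₃(y) = max(α₀₁+y, α₀₂), G₁(y) = max(α₀₂+2y, α₁₂+y, α₂₂), G₃(y) = max(α₁₀+y, α₂₀), and A(x,y) = max(α₀₁+y+2x, α₀₂+2x, α₁₀+2y+x, α₁₂+x, α₂₀+2y, α₂₁+y, α₂₂). Suppose that for all (x,y) ∈ ℝ² with A(x,y) > A(y,x) the condition F₁(y) + G₃(y) = G₁(y) + F₃(y) holds. Then the map defined by x̄ = F₁(y) − F₃(y) − x, ȳ = F₁(x̄) − F₃(x̄) − y preserves the invariant I(x,y) := min(A(x,y), A(y,x)) − x − y; more precisely, for every (x,y) ∈ ℝ², I(x̄, y) = I(x,y) and I(x̄, ȳ) = I(x,y), so that each level set U_κ = {(x,y) : κ + x + y = min(A(x,y), A(y,x))} is invariant. -/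
namespace Stmt11

variable (a01 a02 a10 a12 a20 a21 a22 : ℝ)

/-- `F₁(y) = max(α₂₀+2y, α₂₁+y, α₂₂)`. -/
noncomputable def F1 (y : ℝ) : ℝ := max (a20 + 2 * y) (max (a21 + y) a22)

/-- `F₃(y) = max(α₀₁+y, α₀₂)`. -/
noncomputable def F3 (y : ℝ) : ℝ := max (a01 + y) a02

/-- `G₁(y) = max(α₀₂+2y, α₁₂+y, α₂₂)`. -/
noncomputable def G1 (y : ℝ) : ℝ := max (a02 + 2 * y) (max (a12 + y) a22)

/-- `G₃(y) = max(α₁₀+y, α₂₀)`. -/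
noncomputable def G3 (y : ℝ) : ℝ := max (a10 + y) a20

/-- The tropical biquadratic polynomial
`A(x,y) = max(α₀₁+y+2x, α₀₂+2x, α₁₀+2y+x, α₁₂+x, α₂₀+2y, α₂₁+y, α₂₂)`
(the coefficients `α₀₀` and `α₁₁` being `-∞`). -/
noncomputable def A (x y : ℝ) : ℝ :=
  max (a01 + y + 2 * x) (max (a02 + 2 * x) (max (a10 + 2 * y + x)
    (max (a12 + x) (max (a20 + 2 * y) (max (a21 + y) a22)))))

/-- The invariant `I(x,y) = min(A(x,y), A(y,x)) − x − y`. -/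
noncomputable def I (x y : ℝ) : ℝ :=
  min (A a01 a02 a10 a12 a20 a21 a22 x y) (A a01 a02 a10 a12 a20 a21 a22 y x) - x - y

/-- Key algebraic identity: a tropical quadratic in `x` with leading coefficient `f3`
and constant term `f1`, normalized by subtracting `x`, is invariant under
`x ↦ f1 − f3 − x`. -/
lemma key (f1 f2 f3 x : ℝ) :
    max (f3 + 2 * (f1 - f3 - x)) (max (f2 + (f1 - f3 - x)) f1) - (f1 - f3 - x)
      = max (f3 + 2 * x) (max (f2 + x) f1) - x := by
  rw [← max_sub_sub_right, ← max_sub_sub_right, ← max_sub_sub_right, ← max_sub_sub_right]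
  have h1 : f3 + 2 * (f1 - f3 - x) - (f1 - f3 - x) = f1 - x := by ring
  have h2 : f2 + (f1 - f3 - x) - (f1 - f3 - x) = f2 := by ring
  have h3 : f1 - (f1 - f3 - x) = f3 + x := by ring
  have h4 : f3 + 2 * x - x = f3 + x := by ring
  have h5 : f2 + x - x = f2 := by ring
  rw [h1, h2, h3, h4, h5]
  ac_rfl

/-- `A(x,y)` grouped as a tropical quadratic in `x`. -/
lemma Agroup (x y : ℝ) :
    A a01 a02 a10 a12 a20 a21 a22 x y
      = max (F3 a01 a02 y + 2 * x)
          (max (max (a10 + 2 * y) a12 + x) (F1 a20 a21 a22 y)) := by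
  simp only [A, F3, F1, ← max_add_add_right]
  ring_nf
  ac_rfl

/-- `A(y,x)` grouped as a tropical quadratic in `x`. -/
lemma Agroup2 (x y : ℝ) :
    A a01 a02 a10 a12 a20 a21 a22 y x
      = max (G3 a10 a20 y + 2 * x)
          (max (max (a01 + 2 * y) a21 + x) (G1 a02 a12 a22 y)) := by
  simp only [A, G3, G1, ← max_add_add_right]
  ring_nf
  ac_rfl

/-- Invariance of `A(x,y) − x` under the horizontal involution. -/
lemma hP (x y : ℝ) :
    A a01 a02 a10 a12 a20 a21 a22 (F1 a20 a21 a22 y - F3 a01 a02 y - x) y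
        - (F1 a20 a21 a22 y - F3 a01 a02 y - x)
      = A a01 a02 a10 a12 a20 a21 a22 x y - x := by
  rw [Agroup, Agroup]
  exact key _ _ _ _

/-- Invariance of `A(y,x) − x` under the horizontal involution, given the
compatibility condition at height `y`. -/
lemma hQ (x y : ℝ)
    (h : F1 a20 a21 a22 y + G3 a10 a20 y = G1 a02 a12 a22 y + F3 a01 a02 y) :
    A a01 a02 a10 a12 a20 a21 a22 y (F1 a20 a21 a22 y - F3 a01 a02 y - x)
        - (F1 a20 a21 a22 y - F3 a01 a02 y - x)
      = A a01 a02 a10 a12 a20 a21 a22 y x - x := by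
  have hx2 : F1 a20 a21 a22 y - F3 a01 a02 y - x
      = G1 a02 a12 a22 y - G3 a10 a20 y - x := by linarith
  rw [hx2, Agroup2, Agroup2]
  exact key _ _ _ _

lemma Isymm (x y : ℝ) :
    I a01 a02 a10 a12 a20 a21 a22 x y = I a01 a02 a10 a12 a20 a21 a22 y x := by
  unfold I
  rw [min_comm]
  ring

lemma main
    (hcond : ∀ x y : ℝ,
      A a01 a02 a10 a12 a20 a21 a22 y x < A a01 a02 a10 a12 a20 a21 a22 x y →
      F1 a20 a21 a22 y + G3 a10 a20 y = G1 a02 a12 a22 y + F3 a01 a02 y)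
    (x y : ℝ) :
    I a01 a02 a10 a12 a20 a21 a22 (F1 a20 a21 a22 y - F3 a01 a02 y - x) y =
      I a01 a02 a10 a12 a20 a21 a22 x y := by
  have hmin :
      min (A a01 a02 a10 a12 a20 a21 a22 (F1 a20 a21 a22 y - F3 a01 a02 y - x) y
            - (F1 a20 a21 a22 y - F3 a01 a02 y - x))
          (A a01 a02 a10 a12 a20 a21 a22 y (F1 a20 a21 a22 y - F3 a01 a02 y - x)
            - (F1 a20 a21 a22 y - F3 a01 a02 y - x))
        = min (A a01 a02 a10 a12 a20 a21 a22 x y - x)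
            (A a01 a02 a10 a12 a20 a21 a22 y x - x) := by
    rw [hP a01 a02 a10 a12 a20 a21 a22 x y]
    by_cases h2 : A a01 a02 a10 a12 a20 a21 a22 y (F1 a20 a21 a22 y - F3 a01 a02 y - x)
        < A a01 a02 a10 a12 a20 a21 a22 (F1 a20 a21 a22 y - F3 a01 a02 y - x) y
    · rw [hQ a01 a02 a10 a12 a20 a21 a22 x y (hcond _ y h2)]
    · push_neg at h2
      by_cases h3 : A a01 a02 a10 a12 a20 a21 a22 y x < A a01 a02 a10 a12 a20 a21 a22 x y
      · rw [hQ a01 a02 a10 a12 a20 a21 a22 x y (hcond x y h3)]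
      · push_neg at h3
        have hl : min (A a01 a02 a10 a12 a20 a21 a22 x y - x)
            (A a01 a02 a10 a12 a20 a21 a22 y (F1 a20 a21 a22 y - F3 a01 a02 y - x)
              - (F1 a20 a21 a22 y - F3 a01 a02 y - x))
            = A a01 a02 a10 a12 a20 a21 a22 x y - x := by
          apply min_eq_left
          rw [← hP a01 a02 a10 a12 a20 a21 a22 x y]
          exact sub_le_sub_right h2 _
        have hr : min (A a01 a02 a10 a12 a20 a21 a22 x y - x)
            (A a01 a02 a10 a12 a20 a21 a22 y x - x)
            = A a01 a02 a10 a12 a20 a21 a22 x y - x :=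
          min_eq_left (sub_le_sub_right h3 x)
        rw [hl, hr]
  unfold I
  calc min (A a01 a02 a10 a12 a20 a21 a22 (F1 a20 a21 a22 y - F3 a01 a02 y - x) y)
          (A a01 a02 a10 a12 a20 a21 a22 y (F1 a20 a21 a22 y - F3 a01 a02 y - x))
          - (F1 a20 a21 a22 y - F3 a01 a02 y - x) - y
      = min (A a01 a02 a10 a12 a20 a21 a22 (F1 a20 a21 a22 y - F3 a01 a02 y - x) y
            - (F1 a20 a21 a22 y - F3 a01 a02 y - x))
          (A a01 a02 a10 a12 a20 a21 a22 y (F1 a20 a21 a22 y - F3 a01 a02 y - x)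
            - (F1 a20 a21 a22 y - F3 a01 a02 y - x)) - y := by
        rw [min_sub_sub_right]
    _ = min (A a01 a02 a10 a12 a20 a21 a22 x y - x)
          (A a01 a02 a10 a12 a20 a21 a22 y x - x) - y := by rw [hmin]
    _ = min (A a01 a02 a10 a12 a20 a21 a22 x y)
          (A a01 a02 a10 a12 a20 a21 a22 y x) - x - y := by rw [min_sub_sub_right]

/-- Sufficient condition for integrability of the map arising from a pair of
tropical elliptic pencils: if `F₁(y) + G₃(y) = G₁(y) + F₃(y)` holds whenever
`A(x,y) > A(y,x)`, then the map `x̄ = F₁(y) − F₃(y) − x`,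
`ȳ = F₁(x̄) − F₃(x̄) − y` preserves `I(x,y) = min(A(x,y), A(y,x)) − x − y`,
so every level set `U_κ` is invariant. -/
theorem integrability_of_pair_of_pencils
    (hcond : ∀ x y : ℝ,
      A a01 a02 a10 a12 a20 a21 a22 y x < A a01 a02 a10 a12 a20 a21 a22 x y →
      F1 a20 a21 a22 y + G3 a10 a20 y = G1 a02 a12 a22 y + F3 a01 a02 y) :
    ∀ x y : ℝ,
      I a01 a02 a10 a12 a20 a21 a22 (F1 a20 a21 a22 y - F3 a01 a02 y - x) y =
        I a01 a02 a10 a12 a20 a21 a22 x y ∧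
      I a01 a02 a10 a12 a20 a21 a22 (F1 a20 a21 a22 y - F3 a01 a02 y - x)
          (F1 a20 a21 a22 (F1 a20 a21 a22 y - F3 a01 a02 y - x) -
            F3 a01 a02 (F1 a20 a21 a22 y - F3 a01 a02 y - x) - y) =
        I a01 a02 a10 a12 a20 a21 a22 x y := by
  intro x y
  have h1 := main a01 a02 a10 a12 a20 a21 a22 hcond x y
  refine ⟨h1, ?_⟩
  set xb := F1 a20 a21 a22 y - F3 a01 a02 y - x with hxb
  calc I a01 a02 a10 a12 a20 a21 a22 xb
          (F1 a20 a21 a22 xb - F3 a01 a02 xb - y)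
      = I a01 a02 a10 a12 a20 a21 a22
          (F1 a20 a21 a22 xb - F3 a01 a02 xb - y) xb :=
        Isymm a01 a02 a10 a12 a20 a21 a22 _ _
    _ = I a01 a02 a10 a12 a20 a21 a22 y xb :=
        main a01 a02 a10 a12 a20 a21 a22 hcond y xb
    _ = I a01 a02 a10 a12 a20 a21 a22 xb y :=
        Isymm a01 a02 a10 a12 a20 a21 a22 _ _
    _ = I a01 a02 a10 a12 a20 a21 a22 x y := h1

end Stmt11
end

section
/- The map Ψ₁ acts on its invariant curve Γ̄_κ as translation by 4κ on the tropical Jacobian ℝ/7κℤ: fix κ > 0 and let Γ̄_κ = {(x,y) : H(x,y) = κ}, which is the quadrilateral with vertices W₁ = (κ, 2κ), W₂ = (−κ, 0), W₃ = (0, −κ), W₄ = (κ, −κ) traversed counterclockwise, whose successive edges W₁W₂, W₂W₃, W₃W₄, W₄W₁ have lattice lengths 2κ, κ, κ, 3κ (total lattice length 7κ). Let η : Γ̄_κ → ℝ/7κℤ be the lattice-length parametrization determined by η(W₁) = 0, η(W₂) = 2κ, η(W₃) = 3κ, η(W₄) = 4κ, and affine on each edge (the point W_i + t(W_{i+1}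 − W_i), t ∈ [0,1], is sent to η(W_i) + t·ℓ_i where ℓ_i is the lattice length of the edge). Then for every P ∈ Γ̄_κ, η(Ψ₁(P)) ≡ η(P) + 4κ (mod 7κ). -/
/-- The Abel–Jacobi (lattice-length) parametrization `η : Γ̄_κ → ℝ/7κℤ` of the
quadrilateral `Γ̄_κ = {H = κ}` with vertices `W₁ = (κ,2κ)`, `W₂ = (−κ,0)`,
`W₃ = (0,−κ)`, `W₄ = (κ,−κ)`: it sends `W₁, W₂, W₃, W₄` to `0, 2κ, 3κ, 4κ`
(the successive edges having lattice lengths `2κ, κ, κ, 3κ`) and is affine on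
each edge.  On the edge `W₁W₂` (`y = x + κ`) it equals `κ − x`, on `W₂W₃`
(`y = −x − κ`) it equals `3κ + x`, on `W₃W₄` (`y = −κ`) it equals `3κ + x`,
and on `W₄W₁` (`x = κ`) it equals `5κ + y`. -/
noncomputable def eta (κ : ℝ) (p : ℝ × ℝ) : ℝ :=
  open Classical in
  if p.2 = p.1 + κ then κ - p.1
  else if p.2 = -p.1 - κ then 3 * κ + p.1
  else if p.2 = -κ then 3 * κ + p.1
  else if p.1 = κ then 5 * κ + p.2
  else 0

set_option maxHeartbeats 4000000 in
/-- `Ψ₁` acts on its invariant curve `Γ̄_κ` as translation by `4κ` on the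
tropical Jacobian `ℝ/7κℤ`: `η(Ψ₁(P)) ≡ η(P) + 4κ (mod 7κ)`. -/
theorem psi1_translation_on_jacobian (κ : ℝ) (hκ : 0 < κ) (p : ℝ × ℝ)
    (hp : H p.1 p.2 = κ) :
    ∃ n : ℤ, eta κ (psi1 p) = eta κ p + 4 * κ + 7 * κ * n := by
  obtain ⟨x, y⟩ := p
  simp only [H] at hp
  have h1 : x ≤ κ := hp ▸ le_max_left _ _
  have h2 : -y ≤ κ := hp ▸ le_trans (le_max_left _ _) (le_max_right _ _)
  have h3 : -x + y ≤ κ := hp ▸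
    le_trans (le_trans (le_max_left _ _) (le_max_right _ _)) (le_max_right _ _)
  have h4 : -x - y ≤ κ := hp ▸
    le_trans (le_trans (le_max_right _ _) (le_max_right _ _)) (le_max_right _ _)
  have hd : x = κ ∨ -y = κ ∨ -x + y = κ ∨ -x - y = κ := by
    by_contra hc
    push_neg at hc
    obtain ⟨a, b, c, d⟩ := hc
    have : max x (max (-y) (max (-x + y) (-x - y))) < κ :=
      max_lt (lt_of_le_of_ne h1 a)
        (max_lt (lt_of_le_of_ne h2 b)
          (max_lt (lt_of_le_of_ne h3 c) (lt_of_le_of_ne h4 d)))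
    linarith [hp ▸ this]
  rcases hd with he | he | he | he
  · -- x = κ
    rcases le_or_gt 0 y with hy | hy
    · have ha : |y| = y := abs_of_nonneg hy
      rcases le_total y κ with hyk | hyk
      · simp only [psi1, eta, ha]
        rw [max_eq_right (by linarith : -x + y ≤ (0:ℝ))]
        split_ifs <;>
          first
            | exact ⟨0, by push_cast; linarith⟩
            | exact ⟨-1, by push_cast; linarith⟩
            | (exfalso; linarith)
            | (rename_i h; exact absurd (by linarith) h)
            | (rename_i h _; exact absurd (by linarith) h)
            | (rename_i h _ _; exact absurd (by linarith) h)
            | (rename_i h _ _ _; exact absurd (by linarith) h)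
            | (rename_i h _ _ _ _; exact absurd (by linarith) h)
            | (rename_i h _ _ _ _ _; exact absurd (by linarith) h)
            | (rename_i h _ _ _ _ _ _; exact absurd (by linarith) h)
      · simp only [psi1, eta, ha]
        rw [max_eq_left (by linarith : (0:ℝ) ≤ -x + y)]
        split_ifs <;>
          first
            | exact ⟨0, by push_cast; linarith⟩
            | exact ⟨-1, by push_cast; linarith⟩
            | (exfalso; linarith)
            | (rename_i h; exact absurd (by linarith) h)
            | (rename_i h _; exact absurd (by linarith) h)
            | (rename_i h _ _; exact absurd (by linarith) h)
            | (rename_i h _ _ _; exact absurd (by linarith) h)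
            | (rename_i h _ _ _ _; exact absurd (by linarith) h)
            | (rename_i h _ _ _ _ _; exact absurd (by linarith) h)
            | (rename_i h _ _ _ _ _ _; exact absurd (by linarith) h)
    · have ha : |y| = -y := abs_of_nonpos (by linarith)
      simp only [psi1, eta, ha]
      rw [max_eq_right (by linarith : -x + -y ≤ (0:ℝ))]
      split_ifs <;>
        first
          | exact ⟨0, by push_cast; linarith⟩
          | exact ⟨-1, by push_cast; linarith⟩
          | (exfalso; linarith)
          | (rename_i h; exact absurd (by linarith) h)
          | (rename_i h _; exact absurd (by linarith) h)
          | (rename_i h _ _; exact absurd (by linarith) h)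
          | (rename_i h _ _ _; exact absurd (by linarith) h)
          | (rename_i h _ _ _ _; exact absurd (by linarith) h)
          | (rename_i h _ _ _ _ _; exact absurd (by linarith) h)
          | (rename_i h _ _ _ _ _ _; exact absurd (by linarith) h)
  · -- -y = κ
    have ha : |y| = -y := abs_of_nonpos (by linarith)
    simp only [psi1, eta, ha]
    rw [max_eq_left (by linarith : (0:ℝ) ≤ -x + -y)]
    split_ifs <;>
      first
        | exact ⟨0, by push_cast; linarith⟩
        | exact ⟨-1, by push_cast; linarith⟩
        | (exfalso; linarith)
        | (rename_i h; exact absurd (by linarith) h)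
        | (rename_i h _; exact absurd (by linarith) h)
        | (rename_i h _ _; exact absurd (by linarith) h)
        | (rename_i h _ _ _; exact absurd (by linarith) h)
        | (rename_i h _ _ _ _; exact absurd (by linarith) h)
        | (rename_i h _ _ _ _ _; exact absurd (by linarith) h)
        | (rename_i h _ _ _ _ _ _; exact absurd (by linarith) h)
  · -- -x + y = κ
    have ha : |y| = y := abs_of_nonneg (by linarith)
    simp only [psi1, eta, ha]
    rw [max_eq_left (by linarith : (0:ℝ) ≤ -x + y)]
    split_ifs <;>
      first
        | exact ⟨0, by push_cast; linarith⟩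
        | exact ⟨-1, by push_cast; linarith⟩
        | (exfalso; linarith)
        | (rename_i h; exact absurd (by linarith) h)
        | (rename_i h _; exact absurd (by linarith) h)
        | (rename_i h _ _; exact absurd (by linarith) h)
        | (rename_i h _ _ _; exact absurd (by linarith) h)
        | (rename_i h _ _ _ _; exact absurd (by linarith) h)
        | (rename_i h _ _ _ _ _; exact absurd (by linarith) h)
        | (rename_i h _ _ _ _ _ _; exact absurd (by linarith) h)
  · -- -x - y = κ
    have ha : |y| = -y := abs_of_nonpos (by linarith)
    simp only [psi1, eta, ha]
    rw [max_eq_left (by linarith : (0:ℝ) ≤ -x + -y)]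
    split_ifs <;>
      first
        | exact ⟨0, by push_cast; linarith⟩
        | exact ⟨-1, by push_cast; linarith⟩
        | (exfalso; linarith)
        | (rename_i h; exact absurd (by linarith) h)
        | (rename_i h _; exact absurd (by linarith) h)
        | (rename_i h _ _; exact absurd (by linarith) h)
        | (rename_i h _ _ _; exact absurd (by linarith) h)
        | (rename_i h _ _ _ _; exact absurd (by linarith) h)
        | (rename_i h _ _ _ _ _; exact absurd (by linarith) h)
        | (rename_i h _ _ _ _ _ _; exact absurd (by linarith) h)
end
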